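/- Let λ ≥ 2 and h ≥ 1 be coprime integers, where λ is not a power of a single prime. Let a : ℕ → ℂ be λ-automatic and multiplicative, and suppose there is a Dirichlet character χ of modulus hλ such that a(n) = χ(n) for all n ≥ 1 coprime to hλ. Then a is periodic on the positive integers: there exists d ≥ 1 with a(n+d) = a(n) for all n ≥ 1. -/

import Mathlib

/-- A sequence `f : ℕ → ℂ` is `lam`-automatic if its `lam`-kernel is finite. -/
def IsAutomatic (lam : ℕ) (f : ℕ → ℂ) : Prop :=
  {g : ℕ → ℂ | ∃ k r : ℕ, r < lam ^ k ∧ g = fun n => f (lam ^ k * n + r)}.Finite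

/-- A sequence is multiplicative if `f 1 = 1` and `f (m*n) = f m * f n` for coprime `m n ≥ 1`. -/
def IsMultiplicativeSeq (f : ℕ → ℂ) : Prop :=
  f 1 = 1 ∧ ∀ m n : ℕ, 1 ≤ m → 1 ≤ n → Nat.Coprime m n → f (m * n) = f m * f n

/-- Eventually periodic sequence. -/
def EventuallyPeriodicSeq (f : ℕ → ℂ) : Prop :=
  ∃ d : ℕ, 1 ≤ d ∧ ∃ n₀ : ℕ, ∀ n ≥ n₀, f (n + d) = f n

/-- A Dirichlet character of modulus `k`: `k`-periodic, completely multiplicative,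
and vanishing exactly at arguments not coprime to `k`. -/
def IsDirichletCharacterSeq (k : ℕ) (χ : ℕ → ℂ) : Prop :=
  (∀ n : ℕ, χ (n + k) = χ n) ∧ (∀ m n : ℕ, χ (m * n) = χ m * χ n) ∧
    (∀ n : ℕ, χ n = 0 ↔ 1 < Nat.gcd n k)

namespace Stmt15


lemma chi_add_mul {K : ℕ} {χ : ℕ → ℂ} (hχ : IsDirichletCharacterSeq K χ) (n c : ℕ) :
    χ (n + K * c) = χ n := by
  induction c with
  | zero => simp
  | succ c ih =>
    have h := hχ.1 (n + K * c)
    rw [mul_add, mul_one, ← add_assoc, h, ih]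

lemma chi_modEq {K : ℕ} {χ : ℕ → ℂ} (hχ : IsDirichletCharacterSeq K χ) {x y : ℕ}
    (h : x ≡ y [MOD K]) : χ x = χ y := by
  rcases le_total x y with hle | hle
  · obtain ⟨c, hc⟩ := (Nat.modEq_iff_dvd' hle).mp h
    have : y = x + K * c := by omega
    rw [this, chi_add_mul hχ]
  · obtain ⟨c, hc⟩ := (Nat.modEq_iff_dvd' hle).mp h.symm
    have : x = y + K * c := by omega
    rw [this, chi_add_mul hχ]

lemma chi_one {K : ℕ} {χ : ℕ → ℂ} (hχ : IsDirichletCharacterSeq K χ) : χ 1 = 1 := by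
  have h0 : χ 1 ≠ 0 := by
    rw [Ne, hχ.2.2]
    simp [Nat.gcd_one_left]
  have h1 : χ 1 * χ 1 = χ 1 * 1 := by
    rw [← hχ.2.1]; norm_num
  exact mul_left_cancel₀ h0 h1

lemma chi_pow {K : ℕ} {χ : ℕ → ℂ} (hχ : IsDirichletCharacterSeq K χ) (z e : ℕ) :
    χ (z ^ e) = χ z ^ e := by
  induction e with
  | zero => simpa using chi_one hχ
  | succ e ih => rw [pow_succ, pow_succ, hχ.2.1, ih]

lemma chi_ne_zero {K : ℕ} {χ : ℕ → ℂ} (hχ : IsDirichletCharacterSeq K χ) {z : ℕ}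
    (hz : Nat.Coprime z K) : χ z ≠ 0 := by
  rw [Ne, hχ.2.2]
  rw [Nat.Coprime] at hz
  omega

lemma coprime_of_modEq_one {z M : ℕ} (h : z ≡ 1 [MOD M]) : Nat.Coprime z M := by
  have := Nat.ModEq.gcd_eq h
  simpa [Nat.Coprime, Nat.gcd_one_left] using this

lemma coprime_of_modEq {z w M : ℕ} (h : z ≡ w [MOD M]) (hw : Nat.Coprime w M) :
    Nat.Coprime z M := by
  have := Nat.ModEq.gcd_eq h
  rw [Nat.Coprime] at *
  omega

/-- periodicity extends to multiples of the period -/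
lemma periodic_mul {f : ℕ → ℂ} {d : ℕ} (hf : ∀ n, 1 ≤ n → f (n + d) = f n) (c : ℕ) :
    ∀ n, 1 ≤ n → f (n + d * c) = f n := by
  induction c with
  | zero => simp
  | succ c ih =>
    intro n hn
    have h1 : f (n + d * c + d) = f (n + d * c) := hf _ (by omega)
    rw [mul_add, mul_one, ← add_assoc, h1, ih n hn]

lemma one_lt_gcd_iff {x M : ℕ} (hM : 1 ≤ M) : 1 < Nat.gcd x M ↔ ¬ Nat.Coprime x M := by
  have := Nat.gcd_pos_of_pos_right x hM
  rw [Nat.Coprime]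
  omega

/-- The per-prime hypothesis for the master lemma. -/
def Hyp (K₀ : ℕ) (f χ₀ : ℕ → ℂ) (p : ℕ) : Prop :=
  ∃ E : ℕ, ∃ C β : ℂ,
    (∀ e : ℕ, E ≤ e → f (p ^ e) = C * β ^ e) ∧
    (C ≠ 0 →
      (∀ x y : ℕ, Nat.Coprime x K₀ → Nat.Coprime y K₀ →
        x ≡ y [MOD K₀ / p ^ (K₀.factorization p)] → χ₀ x = χ₀ y) ∧
      (∀ Y : ℕ, Y ≡ p [MOD K₀ / p ^ (K₀.factorization p)] →
        Y ≡ 1 [MOD p ^ (K₀.factorization p)] → χ₀ Y = β))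

lemma master : ∀ K₀ : ℕ, ∀ f χ₀ : ℕ → ℂ, 1 ≤ K₀ → IsMultiplicativeSeq f →
    IsDirichletCharacterSeq K₀ χ₀ → (∀ n, 1 ≤ n → Nat.Coprime n K₀ → f n = χ₀ n) →
    (∀ p : ℕ, p.Prime → p ∣ K₀ → Hyp K₀ f χ₀ p) →
    ∃ d : ℕ, 1 ≤ d ∧ ∀ n, 1 ≤ n → f (n + d) = f n := by
  intro K₀
  induction K₀ using Nat.strong_induction_on with
  | _ K₀ IH =>
  intro f χ₀ hK₀ hf hχ hfχ hH
  by_cases hK1 : K₀ = 1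
  · -- base case
    subst hK1
    refine ⟨1, le_refl 1, fun n hn => ?_⟩
    rw [hfχ (n+1) (by omega) (Nat.coprime_one_right _), hfχ n hn (Nat.coprime_one_right _)]
    exact chi_modEq hχ (Nat.modEq_one)
  · -- peel the smallest prime factor
    have hK0 : K₀ ≠ 0 := by omega
    set p := K₀.minFac with hpdef
    have pp : p.Prime := Nat.minFac_prime hK1
    have hpdvd : p ∣ K₀ := Nat.minFac_dvd K₀
    set γ := K₀.factorization p with hγdef
    have hγ1 : 1 ≤ γ := pp.factorization_pos_of_dvd hK0 hpdvd
    set Pγ := p ^ γ with hPγdef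
    set R := K₀ / p ^ γ with hRdef
    have hKfact : Pγ * R = K₀ := Nat.ordProj_mul_ordCompl_eq_self K₀ p
    have hpR : ¬ p ∣ R := Nat.not_dvd_ordCompl pp hK0
    have hcopPR : Nat.Coprime Pγ R :=
      Nat.Coprime.pow_left _ (Nat.coprime_ordCompl pp hK0)
    have hRpos : 1 ≤ R := Nat.ordCompl_pos p hK0
    have hPγ2 : 2 ≤ Pγ := by
      calc 2 ≤ p := pp.two_le
      _ = p ^ 1 := (pow_one p).symm
      _ ≤ p ^ γ := Nat.pow_le_pow_right pp.pos hγ1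
    have hRlt : R < K₀ := by
      rw [← hKfact]
      have := Nat.mul_lt_mul_of_lt_of_le (show 1 < Pγ by omega) (le_refl R) (by omega)
      omega
    -- CRT representatives
    set cP : ℕ → ℕ := fun z => (Nat.chineseRemainder hcopPR z 1).val with hcPdef
    set cR : ℕ → ℕ := fun z => (Nat.chineseRemainder hcopPR 1 z).val with hcRdef
    have hcP1 : ∀ z, cP z ≡ z [MOD Pγ] := fun z => (Nat.chineseRemainder hcopPR z 1).2.1
    have hcP2 : ∀ z, cP z ≡ 1 [MOD R] := fun z => (Nat.chineseRemainder hcopPR z 1).2.2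
    have hcR1 : ∀ z, cR z ≡ 1 [MOD Pγ] := fun z => (Nat.chineseRemainder hcopPR 1 z).2.1
    have hcR2 : ∀ z, cR z ≡ z [MOD R] := fun z => (Nat.chineseRemainder hcopPR 1 z).2.2
    have hcomb : ∀ z w : ℕ, z ≡ w [MOD Pγ] → z ≡ w [MOD R] → z ≡ w [MOD K₀] := by
      intro z w h1 h2
      rw [← hKfact]
      exact (Nat.modEq_and_modEq_iff_modEq_mul hcopPR).mp ⟨h1, h2⟩
    set χP : ℕ → ℂ := fun z => χ₀ (cP z) with hχPdef
    set χ' : ℕ → ℂ := fun z => χ₀ (cR z) with hχ'def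
    -- basic facts
    have hχPmod : ∀ z w, z ≡ w [MOD Pγ] → χP z = χP w := by
      intro z w h
      exact chi_modEq hχ (hcomb _ _ (((hcP1 z).trans h).trans (hcP1 w).symm)
        ((hcP2 z).trans (hcP2 w).symm))
    have hχ'mod : ∀ z w, z ≡ w [MOD R] → χ' z = χ' w := by
      intro z w h
      exact chi_modEq hχ (hcomb _ _ ((hcR1 z).trans (hcR1 w).symm)
        (((hcR2 z).trans h).trans (hcR2 w).symm))
    have hχPmul : ∀ z w, χP (z * w) = χP z * χP w := by
      intro z w
      have h : χ₀ (cP (z*w)) = χ₀ (cP z * cP w) := by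
        apply chi_modEq hχ
        apply hcomb
        · exact (hcP1 _).trans (((hcP1 z).mul (hcP1 w))).symm
        · exact (hcP2 _).trans (by simpa using (((hcP2 z).mul (hcP2 w))).symm)
      show χ₀ (cP (z*w)) = χ₀ (cP z) * χ₀ (cP w)
      rw [h, hχ.2.1]
    have hχ'mul : ∀ z w, χ' (z * w) = χ' z * χ' w := by
      intro z w
      have h : χ₀ (cR (z*w)) = χ₀ (cR z * cR w) := by
        apply chi_modEq hχ
        apply hcomb
        · exact (hcR1 _).trans (by simpa using (((hcR1 z).mul (hcR1 w))).symm)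
        · exact (hcR2 _).trans (((hcR2 z).mul (hcR2 w))).symm
      show χ₀ (cR (z*w)) = χ₀ (cR z) * χ₀ (cR w)
      rw [h, hχ.2.1]
    have hsplit : ∀ z, χ₀ z = χP z * χ' z := by
      intro z
      have h : χ₀ z = χ₀ (cP z * cR z) := by
        apply chi_modEq hχ
        apply hcomb
        · have := (hcP1 z).mul (hcR1 z)
          simpa using this.symm
        · have := (hcP2 z).mul (hcR2 z)
          simpa using this.symm
      show χ₀ z = χ₀ (cP z) * χ₀ (cR z)
      rw [h, hχ.2.1]
    have hχP1 : χP 1 = 1 := by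
      have h : χ₀ (cP 1) = χ₀ 1 := chi_modEq hχ (hcomb _ _ (hcP1 1) (hcP2 1))
      show χ₀ (cP 1) = 1
      rw [h, chi_one hχ]
    have hχ'1 : χ' 1 = 1 := by
      have h : χ₀ (cR 1) = χ₀ 1 := chi_modEq hχ (hcomb _ _ (hcR1 1) (hcR2 1))
      show χ₀ (cR 1) = 1
      rw [h, chi_one hχ]
    have hχPpow : ∀ z e, χP (z ^ e) = χP z ^ e := by
      intro z e
      induction e with
      | zero => simpa using hχP1
      | succ e ih => rw [pow_succ, pow_succ, hχPmul, ih]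
    have hχPcop : ∀ z, ¬ p ∣ z → Nat.Coprime (cP z) K₀ := by
      intro z hz
      rw [← hKfact, Nat.coprime_mul_iff_right]
      constructor
      · apply coprime_of_modEq (hcP1 z)
        exact Nat.Coprime.pow_right _ ((Nat.coprime_comm).mp ((pp.coprime_iff_not_dvd).mpr hz))
      · exact coprime_of_modEq_one (hcP2 z)
    have hχPne : ∀ z, ¬ p ∣ z → χP z ≠ 0 := by
      intro z hz
      exact chi_ne_zero hχ (hχPcop z hz)
    have hχ'cop : ∀ z, Nat.Coprime z R → Nat.Coprime (cR z) K₀ := by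
      intro z hz
      rw [← hKfact, Nat.coprime_mul_iff_right]
      exact ⟨coprime_of_modEq_one (hcR1 z), coprime_of_modEq (hcR2 z) hz⟩
    have hχ'ne : ∀ z, Nat.Coprime z R → χ' z ≠ 0 := fun z hz => chi_ne_zero hχ (hχ'cop z hz)
    have hχ'pne : χ' p ≠ 0 := hχ'ne p ((pp.coprime_iff_not_dvd).mpr hpR)
    -- χ' is a Dirichlet character sequence mod R
    have hχ'char : IsDirichletCharacterSeq R χ' := by
      refine ⟨fun n => hχ'mod _ _ Nat.add_modEq_right, hχ'mul, fun n => ?_⟩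
      have h1 : χ' n = 0 ↔ ¬ Nat.Coprime (cR n) K₀ := by
        show χ₀ (cR n) = 0 ↔ _
        rw [hχ.2.2, one_lt_gcd_iff hK₀]
      rw [h1, one_lt_gcd_iff hRpos]
      constructor
      · intro hnc hc
        exact hnc (hχ'cop n hc)
      · intro hnc hc
        apply hnc
        have h2 : Nat.Coprime (cR n) R := by
          rw [← hKfact, Nat.coprime_mul_iff_right] at hc
          exact hc.2
        exact coprime_of_modEq (hcR2 n).symm h2
    -- the modified function f'
    set f' : ℕ → ℂ :=
      fun m => χ' p ^ (m.factorization p) * f (m / p ^ (m.factorization p))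
        / χP (m / p ^ (m.factorization p)) with hf'def
    have hordc : ∀ m : ℕ, m ≠ 0 → p ^ (m.factorization p) * (m / p ^ (m.factorization p)) = m :=
      fun m _ => Nat.ordProj_mul_ordCompl_eq_self m p
    have hordnd : ∀ m : ℕ, m ≠ 0 → ¬ p ∣ (m / p ^ (m.factorization p)) :=
      fun m hm => Nat.not_dvd_ordCompl pp hm
    have hordpos : ∀ m : ℕ, m ≠ 0 → 1 ≤ m / p ^ (m.factorization p) :=
      fun m hm => Nat.ordCompl_pos p hm
    -- f' is multiplicative
    have hf'mult : IsMultiplicativeSeq f' := by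
      constructor
      · show χ' p ^ ((1:ℕ).factorization p) * f (1 / p ^ ((1:ℕ).factorization p))
          / χP (1 / p ^ ((1:ℕ).factorization p)) = 1
        rw [Nat.factorization_one]
        simp only [Finsupp.coe_zero, Pi.zero_apply, pow_zero, Nat.div_one]
        rw [hf.1, hχP1]
        norm_num
      · intro m n hm hn hmn
        show χ' p ^ ((m*n).factorization p) * f ((m*n) / p ^ ((m*n).factorization p))
          / χP ((m*n) / p ^ ((m*n).factorization p))
          = _
        have hm0 : m ≠ 0 := by omega
        have hn0 : n ≠ 0 := by omega
        have hvadd : (m*n).factorization p = m.factorization p + n.factorization p := by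
          rw [Nat.factorization_mul hm0 hn0]
          simp
        have hoc : (m*n) / p ^ ((m*n).factorization p)
            = (m / p ^ (m.factorization p)) * (n / p ^ (n.factorization p)) :=
          Nat.ordCompl_mul m n p
        have hcopc : Nat.Coprime (m / p ^ (m.factorization p)) (n / p ^ (n.factorization p)) :=
          Nat.Coprime.coprime_dvd_left (Nat.ordCompl_dvd m p)
            (Nat.Coprime.coprime_dvd_right (Nat.ordCompl_dvd n p) hmn)
        rw [hoc, hvadd, hf.2 _ _ (hordpos m hm0) (hordpos n hn0) hcopc, hχPmul, pow_add,
          hf'def]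
        simp only []
        rw [div_mul_div_comm]
        congr 1
        ring
    -- f' agrees with χ' on integers coprime to R
    have hf'χ' : ∀ m, 1 ≤ m → Nat.Coprime m R → f' m = χ' m := by
      intro m hm hmR
      have hm0 : m ≠ 0 := by omega
      set v := m.factorization p with hvdef
      set c₀ := m / p ^ v with hc₀def
      have hc₀p : ¬ p ∣ c₀ := hordnd m hm0
      have hc₀R : Nat.Coprime c₀ R :=
        Nat.Coprime.coprime_dvd_left (Nat.ordCompl_dvd m p) hmR
      have hc₀K : Nat.Coprime c₀ K₀ := by
        rw [← hKfact, Nat.coprime_mul_iff_right]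
        exact ⟨Nat.Coprime.pow_right _ ((Nat.coprime_comm).mp ((pp.coprime_iff_not_dvd).mpr hc₀p)), hc₀R⟩
      have hfc₀ : f c₀ = χP c₀ * χ' c₀ := by
        rw [hfχ c₀ (hordpos m hm0) hc₀K]
        exact hsplit c₀
      show χ' p ^ v * f c₀ / χP c₀ = χ' m
      rw [hfc₀]
      have hmeq : m = p ^ v * c₀ := (hordc m hm0).symm
      have : χ' m = χ' p ^ v * χ' c₀ := by
        rw [hmeq, hχ'mul, chi_pow hχ'char]
      rw [this]
      have h1 := hχPne _ hc₀p
      field_simp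
    -- transfer of the per-prime hypotheses
    have hH' : ∀ q : ℕ, q.Prime → q ∣ R → Hyp R f' χ' q := by
      intro q hq hqR
      have hqK : q ∣ K₀ := hqR.trans (Nat.ordCompl_dvd K₀ p)
      have hqp : q ≠ p := fun h => hpR (h ▸ hqR)
      obtain ⟨E, C, β, hgeo, hrest⟩ := hH q hq hqK
      have hγq : R.factorization q = K₀.factorization q := by
        rw [hRdef, Nat.factorization_ordCompl]
        exact Finsupp.erase_ne hqp
      have hqγdvd : q ^ (K₀.factorization q) ∣ R := by
        rw [← hγq]
        exact Nat.ordProj_dvd R q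
      have hmoduli : K₀ / q ^ (K₀.factorization q) = Pγ * (R / q ^ (K₀.factorization q)) := by
        calc K₀ / q ^ (K₀.factorization q) = Pγ * R / q ^ (K₀.factorization q) := by
              rw [hKfact]
          _ = Pγ * (R / q ^ (K₀.factorization q)) := Nat.mul_div_assoc Pγ hqγdvd
      have hχPqne : χP q ≠ 0 := hχPne q (fun hdvd => hqp ((Nat.prime_dvd_prime_iff_eq pp hq).mp hdvd).symm)
      refine ⟨E, C, β / χP q, ?_, ?_⟩
      · intro e he
        have hvq : (q ^ e).factorization p = 0 := by
          apply Nat.factorization_eq_zero_of_not_dvd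
          intro hdvd
          exact hqp ((Nat.prime_dvd_prime_iff_eq pp hq).mp (pp.dvd_of_dvd_pow hdvd)).symm
        show χ' p ^ ((q^e).factorization p) * f ((q^e) / p ^ ((q^e).factorization p))
          / χP ((q^e) / p ^ ((q^e).factorization p)) = C * (β / χP q) ^ e
        rw [hvq]
        simp only [pow_zero, Nat.div_one, one_mul]
        rw [hgeo e he, hχPpow, div_pow]
        field_simp
      · intro hC
        obtain ⟨hPR, hβchar⟩ := hrest hC
        have hRq : R / q ^ (R.factorization q) = R / q ^ (K₀.factorization q) := by rw [hγq]
        have hcopPRq : Nat.Coprime Pγ (R / q ^ (K₀.factorization q)) :=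
          Nat.Coprime.coprime_dvd_right (Nat.div_dvd_of_dvd hqγdvd) hcopPR
        have hcombq : ∀ z w : ℕ, z ≡ w [MOD Pγ] → z ≡ w [MOD R / q ^ (K₀.factorization q)] →
            z ≡ w [MOD K₀ / q ^ (K₀.factorization q)] := by
          intro z w h1 h2
          rw [hmoduli]
          exact (Nat.modEq_and_modEq_iff_modEq_mul hcopPRq).mp ⟨h1, h2⟩
        have hRqdvdR : R / q ^ (K₀.factorization q) ∣ R := Nat.div_dvd_of_dvd hqγdvd
        constructor
        · intro x y hx hy hxy
          rw [hRq] at hxy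
          show χ₀ (cR x) = χ₀ (cR y)
          apply hPR _ _ (hχ'cop x hx) (hχ'cop y hy)
          apply hcombq
          · exact (hcR1 x).trans (hcR1 y).symm
          · exact (((hcR2 x).of_dvd hRqdvdR).trans hxy).trans ((hcR2 y).of_dvd hRqdvdR).symm
        · intro Y hY1 hY2
          rw [hRq] at hY1
          rw [hγq] at hY2
          have hchain : χ' Y * χP q = β := by
            show χ₀ (cR Y) * χ₀ (cP q) = β
            rw [← hχ.2.1]
            apply hβchar
            · apply hcombq
              · -- mod Pγ : cR Y * cP q ≡ 1 * q = q
                have := (hcR1 Y).mul (hcP1 q)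
                simpa using this
              · -- mod R/q^γq : cR Y * cP q ≡ Y * 1 ≡ q
                have h3 : cR Y * cP q ≡ Y [MOD R] := by
                  have := (hcR2 Y).mul (hcP2 q)
                  simpa using this
                exact (h3.of_dvd hRqdvdR).trans hY1
            · -- mod q^γq : cR Y * cP q ≡ 1
              have hqdvd2 : q ^ (K₀.factorization q) ∣ R := hqγdvd
              have h5 : cR Y * cP q ≡ Y [MOD q ^ (K₀.factorization q)] := by
                have := ((hcR2 Y).mul (hcP2 q)).of_dvd hqdvd2
                simpa using this
              exact h5.trans hY2
          rw [eq_div_iff hχPqne]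
          exact hchain
    -- apply the induction hypothesis
    obtain ⟨d', hd'1, hd'per⟩ := IH R hRlt f' χ' hRpos hf'mult hχ'char hf'χ' hH'
    -- final transfer
    obtain ⟨E, C, β, hgeo, hrest⟩ := hH p pp hpdvd
    refine ⟨p ^ (E + γ) * d', Nat.mul_pos (pow_pos pp.pos _) (by omega), ?_⟩
    intro n hn
    have hn0 : n ≠ 0 := by omega
    set d := p ^ (E + γ) * d' with hddef
    have hd0 : d ≠ 0 := (Nat.mul_pos (pow_pos pp.pos _) (show 0 < d' by omega)).ne'
    have hnd0 : n + d ≠ 0 := by omega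
    set v := n.factorization p with hvdef
    set v' := (n + d).factorization p with hv'def
    set n₀ := n / p ^ v with hn₀def
    set n₀' := (n + d) / p ^ v' with hn₀'def
    have hn₀pos : 1 ≤ n₀ := hordpos n hn0
    have hn₀'pos : 1 ≤ n₀' := hordpos _ hnd0
    have hn₀p : ¬ p ∣ n₀ := hordnd n hn0
    have hn₀'p : ¬ p ∣ n₀' := hordnd _ hnd0
    have hneq : n = p ^ v * n₀ := (hordc n hn0).symm
    have hndeq : n + d = p ^ v' * n₀' := (hordc _ hnd0).symm
    have hfn : f n = f (p ^ v) * f n₀ := by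
      conv_lhs => rw [hneq]
      exact hf.2 _ _ (pow_pos pp.pos _) hn₀pos
        (Nat.Coprime.pow_left _ ((pp.coprime_iff_not_dvd).mpr hn₀p))
    have hfnd : f (n + d) = f (p ^ v') * f n₀' := by
      conv_lhs => rw [hndeq]
      exact hf.2 _ _ (pow_pos pp.pos _) hn₀'pos
        (Nat.Coprime.pow_left _ ((pp.coprime_iff_not_dvd).mpr hn₀'p))
    have hf'n : f' n = χ' p ^ v * f n₀ / χP n₀ := rfl
    have hf'nd : f' (n + d) = χ' p ^ v' * f n₀' / χP n₀' := rfl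
    have hper : f' (n + d) = f' n := by
      rw [hddef, mul_comm (p ^ (E + γ)) d']
      exact periodic_mul hd'per _ n hn
    -- the key scalar identity
    have hχPn₀ne := hχPne _ hn₀p
    have hχPn₀'ne := hχPne _ hn₀'p
    -- dichotomy on the valuations
    have hvd : (E + γ) ≤ d.factorization p := by
      rw [hddef]
      have : p ^ (E + γ) ∣ p ^ (E + γ) * d' := Dvd.intro d' rfl
      exact (pp.pow_dvd_iff_le_factorization hd0).mp this
    have hcase : (v < E + γ ∧ v' = v) ∨ (E + γ ≤ v ∧ E + γ ≤ v') := by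
      by_cases hv : v < E + γ
      · left
        refine ⟨hv, ?_⟩
        have h1 : p ^ v ∣ n + d := by
          apply Nat.dvd_add (Nat.ordProj_dvd n p)
          exact (Nat.pow_dvd_pow p (by omega)).trans (Nat.ordProj_dvd d p)
        have h2 : ¬ p ^ (v + 1) ∣ n + d := by
          intro hcon
          have h3 : p ^ (v+1) ∣ d := (Nat.pow_dvd_pow p (by omega)).trans (Nat.ordProj_dvd d p)
          have h4 : p ^ (v+1) ∣ n := by
            have h5 := Nat.dvd_sub hcon h3
            simpa using h5
          exact (Nat.pow_succ_factorization_not_dvd hn0 pp) h4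
        have h5 : v ≤ v' := (pp.pow_dvd_iff_le_factorization hnd0).mp h1
        have h6 : ¬ (v + 1 ≤ v') := fun hcon =>
          h2 ((pp.pow_dvd_iff_le_factorization hnd0).mpr hcon)
        omega
      · right
        refine ⟨by omega, ?_⟩
        have h1 : p ^ (E + γ) ∣ n :=
          (pp.pow_dvd_iff_le_factorization hn0).mpr (by omega)
        have h2 : p ^ (E + γ) ∣ d :=
          (pp.pow_dvd_iff_le_factorization hd0).mpr hvd
        exact (pp.pow_dvd_iff_le_factorization hnd0).mp (Nat.dvd_add h1 h2)
    -- scalar identity (†)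
    have hdagger : f (p ^ v) * χP n₀ * χ' p ^ v' = f (p ^ v') * χP n₀' * χ' p ^ v := by
      by_cases hC : C = 0
      · rcases hcase with ⟨hv, hv'⟩ | ⟨hv, hv'⟩
        · rcases le_or_gt E v with hEv | hEv
          · -- both values of f vanish
            rw [hv', hgeo v hEv, hC]
            ring
          · -- low case : compare χP n₀ and χP n₀'
            have hn₀'eq : n₀' = n₀ + p ^ (E + γ - v) * d' := by
              have hdvd1 : p ^ v ∣ n := Nat.ordProj_dvd n p
              obtain ⟨nn, hnn⟩ := hdvd1
              have : n + d = p ^ v * (nn + p ^ (E + γ - v) * d') := by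
                rw [hnn, hddef, mul_add, ← mul_assoc, ← pow_add]
                congr 3
                omega
              rw [hn₀'def, hv', this, hn₀def, hnn]
              rw [Nat.mul_div_cancel_left _ (pow_pos pp.pos v), Nat.mul_div_cancel_left _ (pow_pos pp.pos v)]
            have hχPeq : χP n₀' = χP n₀ := by
              apply hχPmod
              rw [hn₀'eq]
              have : Pγ ∣ p ^ (E + γ - v) * d' := by
                apply Dvd.dvd.mul_right
                rw [hPγdef]
                exact Nat.pow_dvd_pow p (by omega)
              calc n₀ + p ^ (E + γ - v) * d' ≡ n₀ + 0 [MOD Pγ] :=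
                    Nat.ModEq.add_left n₀ ((Nat.modEq_zero_iff_dvd).mpr this)
                _ = n₀ := by omega
            rw [hv', hχPeq]
        · rw [hgeo v (by omega), hgeo v' (by omega), hC]
          ring
      · obtain ⟨hPR, hβchar⟩ := hrest hC
        have hχPone : ∀ z, ¬ p ∣ z → χP z = 1 := by
          intro z hz
          have h1 : χ₀ (cP z) = χ₀ 1 := by
            apply hPR _ _ (hχPcop z hz) (Nat.coprime_one_left _)
            exact (hcP2 z)
          show χ₀ (cP z) = 1
          rw [h1, chi_one hχ]
        have hβ : χ' p = β := by
          apply hβchar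
          · exact hcR2 p
          · exact hcR1 p
        rw [hχPone _ hn₀p, hχPone _ hn₀'p]
        rcases hcase with ⟨hv, hv'⟩ | ⟨hv, hv'⟩
        · rw [hv']
        · rw [hgeo v (by omega), hgeo v' (by omega), hβ]
          ring
    -- conclude
    have hχ'pvne : χ' p ^ v ≠ 0 := pow_ne_zero _ hχ'pne
    have hχ'pv'ne : χ' p ^ v' ≠ 0 := pow_ne_zero _ hχ'pne
    have hx1 : f' n * χP n₀ = χ' p ^ v * f n₀ := by
      rw [hf'n]
      field_simp
    have hx2 : f' (n + d) * χP n₀' = χ' p ^ v' * f n₀' := by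
      rw [hf'nd]
      field_simp
    have e1 : f n * χ' p ^ v = f (p ^ v) * (f' n * χP n₀) := by
      rw [hfn, hx1]
      ring
    have e2 : f (n + d) * χ' p ^ v' = f (p ^ v') * (f' n * χP n₀') := by
      rw [hfnd, ← hper, hx2]
      ring
    have e3 : f n * (χ' p ^ v * χ' p ^ v') = f (n + d) * (χ' p ^ v * χ' p ^ v') := by
      calc f n * (χ' p ^ v * χ' p ^ v') = (f n * χ' p ^ v) * χ' p ^ v' := by ring
      _ = (f (p ^ v) * χP n₀ * χ' p ^ v') * f' n := by rw [e1]; ring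
      _ = (f (p ^ v') * χP n₀' * χ' p ^ v) * f' n := by rw [hdagger]
      _ = (f (n + d) * χ' p ^ v') * χ' p ^ v := by rw [e2]; ring
      _ = f (n + d) * (χ' p ^ v * χ' p ^ v') := by ring
    exact mul_right_cancel₀ (mul_ne_zero hχ'pvne hχ'pv'ne) e3.symm

lemma not_dvd_of_modEq {p m x : ℕ} (h : m ≡ x [MOD p]) (hx : ¬ p ∣ x) : ¬ p ∣ m := by
  intro hm
  apply hx
  rw [← Nat.modEq_zero_iff_dvd] at *
  exact h.symm.trans hm

lemma ppl (lam h : ℕ) (hlam : 2 ≤ lam) (hh : 1 ≤ h)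
    (hcop : Nat.Coprime h lam)
    (hnotpp : ¬ ∃ (p k : ℕ), p.Prime ∧ lam = p ^ k)
    (a : ℕ → ℂ) (haut : IsAutomatic lam a) (ha : IsMultiplicativeSeq a)
    (χ : ℕ → ℂ) (hχ : IsDirichletCharacterSeq (h * lam) χ)
    (haχ : ∀ n : ℕ, 1 ≤ n → Nat.Coprime n (h * lam) → a n = χ n) :
    ∀ p : ℕ, p.Prime → p ∣ h * lam → Hyp (h * lam) a χ p := by
  intro p pp hpK
  set K := h * lam with hKdef
  have hK0 : K ≠ 0 := by positivity
  have hlam0 : lam ≠ 0 := by omega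
  have hh0 : h ≠ 0 := by omega
  -- basic structure
  set α := lam.factorization p with hαdef
  set P := p ^ α with hPdef
  set Q := lam / p ^ α with hQdef
  have hPQ : P * Q = lam := Nat.ordProj_mul_ordCompl_eq_self lam p
  have hpQ : ¬ p ∣ Q := Nat.not_dvd_ordCompl pp hlam0
  have hQpos : 1 ≤ Q := Nat.ordCompl_pos p hlam0
  have hQ2 : 2 ≤ Q := by
    rcases Nat.lt_or_ge Q 2 with hQ | hQ
    · exfalso
      apply hnotpp
      refine ⟨p, α, pp, ?_⟩
      have : Q = 1 := by omega
      rw [← hPQ, this, mul_one, hPdef]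
    · exact hQ
  set γ := K.factorization p with hγdef
  have hγ1 : 1 ≤ γ := pp.factorization_pos_of_dvd hK0 hpK
  set R := K / p ^ γ with hRdef
  have hKfact : p ^ γ * R = K := Nat.ordProj_mul_ordCompl_eq_self K p
  have hpR : ¬ p ∣ R := Nat.not_dvd_ordCompl pp hK0
  have hcopPR : Nat.Coprime (p ^ γ) R := Nat.Coprime.pow_left _ (Nat.coprime_ordCompl pp hK0)
  have hRpos : 1 ≤ R := Nat.ordCompl_pos p hK0
  set H' := h / p ^ (h.factorization p) with hH'def
  have hpH' : ¬ p ∣ H' := Nat.not_dvd_ordCompl pp hh0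
  have hH'pos : 1 ≤ H' := Nat.ordCompl_pos p hh0
  have hRHQ : R = H' * Q := by
    rw [hRdef, hKdef]
    exact Nat.ordCompl_mul h lam p
  have hcopH'Q : Nat.Coprime H' Q :=
    Nat.Coprime.coprime_dvd_left (Nat.ordCompl_dvd h p)
      (Nat.Coprime.coprime_dvd_right (Nat.ordCompl_dvd lam p) hcop)
  -- CRT representatives mod (p^γ, R)
  set cP : ℕ → ℕ := fun z => (Nat.chineseRemainder hcopPR z 1).val with hcPdef
  set cR : ℕ → ℕ := fun z => (Nat.chineseRemainder hcopPR 1 z).val with hcRdef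
  have hcP1 : ∀ z, cP z ≡ z [MOD p ^ γ] := fun z => (Nat.chineseRemainder hcopPR z 1).2.1
  have hcP2 : ∀ z, cP z ≡ 1 [MOD R] := fun z => (Nat.chineseRemainder hcopPR z 1).2.2
  have hcR1 : ∀ z, cR z ≡ 1 [MOD p ^ γ] := fun z => (Nat.chineseRemainder hcopPR 1 z).2.1
  have hcR2 : ∀ z, cR z ≡ z [MOD R] := fun z => (Nat.chineseRemainder hcopPR 1 z).2.2
  have hcomb : ∀ z w : ℕ, z ≡ w [MOD p ^ γ] → z ≡ w [MOD R] → z ≡ w [MOD K] := by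
    intro z w h1 h2
    rw [← hKfact]
    exact (Nat.modEq_and_modEq_iff_modEq_mul hcopPR).mp ⟨h1, h2⟩
  -- the pigeonhole on the kernel
  set G : ℕ → (ℕ → ℂ) := fun k => fun n => a (lam ^ k * n + P ^ k) with hGdef
  have hGmem : Set.MapsTo G (Set.Ici 1)
      {g : ℕ → ℂ | ∃ k r : ℕ, r < lam ^ k ∧ g = fun n => a (lam ^ k * n + r)} := by
    intro k hk
    refine ⟨k, P ^ k, ?_, rfl⟩
    rw [← hPQ, mul_pow]
    have h1 : 1 ≤ P ^ k := pow_pos (pow_pos pp.pos α) k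
    have h2 : 2 ≤ Q ^ k := by
      calc 2 = 2 ^ 1 := (pow_one 2).symm
      _ ≤ 2 ^ k := Nat.pow_le_pow_right (by omega) hk
      _ ≤ Q ^ k := Nat.pow_le_pow_left hQ2 k
    calc P ^ k = P ^ k * 1 := (mul_one _).symm
    _ < P ^ k * Q ^ k := by
      exact mul_lt_mul_of_pos_left (by omega) (by omega)
  obtain ⟨k₁, hk₁, k₂, hk₂, hk₁₂, hG12⟩ :=
    Set.Ici_infinite (1 : ℕ) |>.exists_ne_map_eq_of_mapsTo hGmem haut
  -- order them
  obtain ⟨k, k', hk1, hkk', hG⟩ : ∃ k k' : ℕ, 1 ≤ k ∧ k < k' ∧ G k = G k' := by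
    rcases Nat.lt_or_ge k₁ k₂ with hlt | hge
    · exact ⟨k₁, k₂, hk₁, hlt, hG12⟩
    · have hlt : k₂ < k₁ := by omega
      exact ⟨k₂, k₁, hk₂, hlt, hG12.symm⟩
  set t := k' - k with htdef
  have ht1 : 1 ≤ t := by omega
  have hk' : k' = k + t := by omega
  set T := Q ^ t with hTdef
  have hT2 : 2 ≤ T := by
    calc 2 = 2 ^ 1 := (pow_one 2).symm
    _ ≤ 2 ^ t := Nat.pow_le_pow_right (by omega) ht1
    _ ≤ Q ^ t := Nat.pow_le_pow_left hQ2 t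
  set δ := (T - 1).factorization p with hδdef
  set U := (T - 1) / p ^ δ with hUdef
  have hT10 : T - 1 ≠ 0 := by omega
  have hUeq : p ^ δ * U = T - 1 := Nat.ordProj_mul_ordCompl_eq_self (T - 1) p
  have hpU : ¬ p ∣ U := Nat.not_dvd_ordCompl pp hT10
  have hUpos : 1 ≤ U := Nat.ordCompl_pos p hT10
  set ζ := U * (p ^ γ - 1) with hζdef
  have hpγ1 : 1 ≤ p ^ γ := pow_pos pp.pos γ
  have hpγ2 : 2 ≤ p ^ γ := by
    calc 2 ≤ p := pp.two_le
    _ = p ^ 1 := (pow_one p).symm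
    _ ≤ p ^ γ := Nat.pow_le_pow_right pp.pos hγ1
  have hpζ : ¬ p ∣ ζ := by
    rw [hζdef]
    intro hdvd
    rcases (Nat.Prime.dvd_mul pp).mp hdvd with h1 | h1
    · exact hpU h1
    · have h2 : p ∣ p ^ γ := dvd_pow_self p (by omega)
      have h3 : p ∣ 1 := by
        have h4 := Nat.dvd_sub h2 h1
        rwa [Nat.sub_sub_self (by omega : 1 ≤ p ^ γ)] at h4
      exact pp.not_dvd_one h3
  have hcopM₁ : ∀ j : ℕ, Nat.Coprime (Q ^ k) (p ^ j) :=
    fun j => Nat.Coprime.pow _ _ (((pp.coprime_iff_not_dvd).mpr hpQ).symm)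
  have hMR1 : ∀ kk nn : ℕ, 1 ≤ kk → H' ∣ nn → Q ^ kk * nn + 1 ≡ 1 [MOD R] := by
    intro kk nn hkk hnn
    rw [hRHQ]
    apply (Nat.modEq_and_modEq_iff_modEq_mul hcopH'Q).mp
    constructor
    · have h1 : H' ∣ Q ^ kk * nn := hnn.mul_left _
      simpa using (Nat.modEq_zero_iff_dvd.mpr h1).add_right 1
    · have h1 : Q ∣ Q ^ kk * nn := (dvd_pow_self Q (by omega : kk ≠ 0)).mul_right nn
      simpa using (Nat.modEq_zero_iff_dvd.mpr h1).add_right 1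
  have hsplit : ∀ z, χ z = χ (cP z) * χ (cR z) := by
    intro z
    have h : χ z = χ (cP z * cR z) := by
      apply chi_modEq hχ
      apply hcomb
      · have := (hcP1 z).mul (hcR1 z)
        simpa using this.symm
      · have := (hcP2 z).mul (hcR2 z)
        simpa using this.symm
    rw [h, hχ.2.1]
  set β := χ (cR p) with hβdef
  have hcRpK : Nat.Coprime (cR p) K := by
    rw [← hKfact, Nat.coprime_mul_iff_right]
    exact ⟨coprime_of_modEq_one (hcR1 p),
      coprime_of_modEq (hcR2 p) ((pp.coprime_iff_not_dvd).mpr hpR)⟩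
  have hβne : β ≠ 0 := chi_ne_zero hχ hcRpK
  have hcP1x : χ (cP 1) = 1 := by
    have h : χ (cP 1) = χ 1 := chi_modEq hχ (hcomb _ _ (hcP1 1) (hcP2 1))
    rw [h, chi_one hχ]
  -- the key identity
  have key : ∀ j x : ℕ, δ + γ ≤ j → ¬ p ∣ x →
      a (p ^ (α * k + j)) * χ (cP x) * β ^ δ
        = a (p ^ (α * k' + δ)) * χ (cP ζ) * β ^ j := by
    intro j x hj hx
    have hx1 : 1 ≤ x := Nat.pos_of_ne_zero fun h0 => hx (h0 ▸ dvd_zero p)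
    have hδj : δ ≤ j := by omega
    -- construct n via CRT
    set M₁ := p ^ (j + γ) with hM₁def
    have hM₁pos : 0 < M₁ := pow_pos pp.pos _
    haveI : NeZero M₁ := ⟨by omega⟩
    obtain ⟨ρ, hρ⟩ : ∃ ρ : ℕ, Q ^ k * ρ ≡ p ^ j * x - 1 [MOD M₁] := by
      obtain ⟨u, hu⟩ := (ZMod.isUnit_iff_coprime (Q ^ k) M₁).mpr (hcopM₁ (j + γ))
      refine ⟨(↑u⁻¹ * ((p ^ j * x - 1 : ℕ) : ZMod M₁)).val, ?_⟩
      have hcast : ((Q ^ k * (↑u⁻¹ * ((p ^ j * x - 1 : ℕ) : ZMod M₁)).val : ℕ) : ZMod M₁)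
          = ((p ^ j * x - 1 : ℕ) : ZMod M₁) := by
        have hv : (((↑u⁻¹ * ((p ^ j * x - 1 : ℕ) : ZMod M₁)).val : ℕ) : ZMod M₁)
            = ↑u⁻¹ * ((p ^ j * x - 1 : ℕ) : ZMod M₁) :=
          ZMod.natCast_rightInverse _
        rw [Nat.cast_mul, hv, ← hu, ← mul_assoc, u.mul_inv, one_mul]
      exact (ZMod.natCast_eq_natCast_iff _ _ _).mp hcast
    have hcopM₁H' : Nat.Coprime M₁ H' :=
      Nat.Coprime.pow_left _ ((pp.coprime_iff_not_dvd).mpr hpH')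
    set n := (Nat.chineseRemainder hcopM₁H' ρ 0).val with hndef
    have hn1 : n ≡ ρ [MOD M₁] := (Nat.chineseRemainder hcopM₁H' ρ 0).2.1
    have hn2 : H' ∣ n := Nat.modEq_zero_iff_dvd.mp (Nat.chineseRemainder hcopM₁H' ρ 0).2.2
    set M := Q ^ k * n + 1 with hMdef
    have hM1 : 1 ≤ M := Nat.le_add_left 1 _
    have hMmod : M ≡ p ^ j * x [MOD M₁] := by
      have h1 : Q ^ k * n ≡ Q ^ k * ρ [MOD M₁] := hn1.mul_left _
      have h2 : Q ^ k * n + 1 ≡ (p ^ j * x - 1) + 1 [MOD M₁] := (h1.trans hρ).add_right 1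
      have h3 : p ^ j * x - 1 + 1 = p ^ j * x := by
        have := Nat.mul_pos (pow_pos pp.pos j) hx1
        omega
      rwa [h3] at h2
    have hpjM : p ^ j ∣ M := by
      have h4 : M ≡ p ^ j * x [MOD p ^ j] := hMmod.of_dvd (pow_dvd_pow p (by omega))
      have h5 : p ^ j * x ≡ 0 [MOD p ^ j] := (Nat.modEq_zero_iff_dvd).mpr (Dvd.intro x rfl)
      exact (Nat.modEq_zero_iff_dvd).mp (h4.trans h5)
    set m := M / p ^ j with hmdef
    have hmM : p ^ j * m = M := Nat.mul_div_cancel' hpjM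
    have hm1 : 1 ≤ m := by
      rcases Nat.eq_zero_or_pos m with h0 | h0
      · rw [h0, mul_zero] at hmM; omega
      · exact h0
    have hmx : m ≡ x [MOD p ^ γ] := by
      have h6 : p ^ j * m ≡ p ^ j * x [MOD p ^ j * p ^ γ] := by
        rw [hmM, ← pow_add]
        exact hMmod
      exact Nat.ModEq.mul_left_cancel' (pow_ne_zero j pp.ne_zero) h6
    have hpm : ¬ p ∣ m :=
      not_dvd_of_modEq (hmx.of_dvd (dvd_pow_self p (by omega : γ ≠ 0))) hx
    have hMR : M ≡ 1 [MOD R] := hMR1 k n hk1 hn2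
    have hmK : Nat.Coprime m K := by
      rw [← hKfact, Nat.coprime_mul_iff_right]
      refine ⟨Nat.Coprime.pow_right _ (((pp.coprime_iff_not_dvd).mpr hpm).symm), ?_⟩
      exact Nat.Coprime.coprime_dvd_left ⟨p ^ j, by rw [← hmM]; ring⟩
        (coprime_of_modEq_one hMR)
    -- value of G k at n
    have hGkn : G k n = a (p ^ (α * k + j)) * χ m := by
      show a (lam ^ k * n + P ^ k) = _
      have h7 : lam ^ k = p ^ (α * k) * Q ^ k := by
        rw [← hPQ, mul_pow, hPdef, ← pow_mul]
      have harg : lam ^ k * n + P ^ k = p ^ (α * k) * M := by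
        rw [h7, hMdef, hPdef, ← pow_mul]
        ring
      rw [harg, ← hmM, ← mul_assoc, ← pow_add,
        ha.2 _ _ (pow_pos pp.pos _) hm1
          (Nat.Coprime.pow_left _ ((pp.coprime_iff_not_dvd).mpr hpm)),
        haχ m hm1 hmK]
    have hχm : χ m * β ^ j = χ (cP x) := by
      rw [hβdef, ← chi_pow hχ, ← hχ.2.1]
      apply chi_modEq hχ
      apply hcomb
      · calc m * cR p ^ j ≡ x * 1 ^ j [MOD p ^ γ] := (hmx.mul ((hcR1 p).pow j))
        _ = x := by rw [one_pow, mul_one]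
        _ ≡ cP x [MOD p ^ γ] := (hcP1 x).symm
      · calc m * cR p ^ j ≡ m * p ^ j [MOD R] := Nat.ModEq.mul_left m ((hcR2 p).pow j)
        _ = M := by rw [← hmM]; ring
        _ ≡ 1 [MOD R] := hMR
        _ ≡ cP x [MOD R] := (hcP2 x).symm
    -- the k' side
    set M' := Q ^ k' * n + 1 with hM'def
    have hM'1 : 1 ≤ M' := Nat.le_add_left 1 _
    have hM'sum : M' + (T - 1) = T * M := by
      have h7 : Q ^ k' = T * Q ^ k := by rw [hTdef, hk', pow_add, mul_comm]
      calc M' + (T - 1) = T * Q ^ k * n + (1 + (T - 1)) := by rw [hM'def, h7]; ring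
      _ = T * Q ^ k * n + T := by congr 1; omega
      _ = T * M := by rw [hMdef]; ring
    have hpδM' : p ^ δ ∣ M' := by
      have h8 : p ^ δ ∣ T * M := ((pow_dvd_pow p hδj).trans hpjM).mul_left T
      have h9 : p ^ δ ∣ T - 1 := by rw [← hUeq]; exact Dvd.intro U rfl
      have h10 : M' = T * M - (T - 1) := by omega
      rw [h10]; exact Nat.dvd_sub h8 h9
    set m' := M' / p ^ δ with hm'def
    have hm'M' : p ^ δ * m' = M' := Nat.mul_div_cancel' hpδM'
    have hm'1 : 1 ≤ m' := by
      rcases Nat.eq_zero_or_pos m' with h0 | h0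
      · rw [h0, mul_zero] at hm'M'; omega
      · exact h0
    have hpjsplit : p ^ j = p ^ δ * p ^ (j - δ) := by
      rw [← pow_add]; congr 1; omega
    have hm'sum : m' + U = T * p ^ (j - δ) * m := by
      apply Nat.eq_of_mul_eq_mul_left (pow_pos pp.pos δ)
      rw [mul_add, hm'M', hUeq]
      calc M' + (T - 1) = T * M := hM'sum
      _ = T * (p ^ j * m) := by rw [hmM]
      _ = p ^ δ * (T * p ^ (j - δ) * m) := by rw [hpjsplit]; ring
    have hm'mod : m' ≡ ζ [MOD p ^ γ] := by
      have h11 : p ^ γ ∣ T * p ^ (j - δ) * m := by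
        have h12 : p ^ γ ∣ p ^ (j - δ) := pow_dvd_pow p (by omega)
        exact h12.trans ⟨T * m, by ring⟩
      have h12 : m' + U ≡ 0 [MOD p ^ γ] := by
        rw [hm'sum]; exact (Nat.modEq_zero_iff_dvd).mpr h11
      have hζU : ζ + U = U * p ^ γ := by
        obtain ⟨w, hw⟩ := Nat.exists_eq_add_of_le hpγ1
        rw [hζdef, hw]
        simp only [Nat.add_sub_cancel_left]
        ring
      have h13 : ζ + U ≡ 0 [MOD p ^ γ] := by
        apply (Nat.modEq_zero_iff_dvd).mpr
        rw [hζU]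
        exact Dvd.intro_left U rfl
      exact Nat.ModEq.add_right_cancel' U (h12.trans h13.symm)
    have hpm' : ¬ p ∣ m' :=
      not_dvd_of_modEq (hm'mod.of_dvd (dvd_pow_self p (by omega : γ ≠ 0))) hpζ
    have hM'R : M' ≡ 1 [MOD R] := hMR1 k' n (by omega) hn2
    have hm'K : Nat.Coprime m' K := by
      rw [← hKfact, Nat.coprime_mul_iff_right]
      refine ⟨Nat.Coprime.pow_right _ (((pp.coprime_iff_not_dvd).mpr hpm').symm), ?_⟩
      exact Nat.Coprime.coprime_dvd_left ⟨p ^ δ, by rw [← hm'M']; ring⟩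
        (coprime_of_modEq_one hM'R)
    have hGk'n : G k' n = a (p ^ (α * k' + δ)) * χ m' := by
      show a (lam ^ k' * n + P ^ k') = _
      have h7 : lam ^ k' = p ^ (α * k') * Q ^ k' := by
        rw [← hPQ, mul_pow, hPdef, ← pow_mul]
      have harg : lam ^ k' * n + P ^ k' = p ^ (α * k') * M' := by
        rw [h7, hM'def, hPdef, ← pow_mul]
        ring
      rw [harg, ← hm'M', ← mul_assoc, ← pow_add,
        ha.2 _ _ (pow_pos pp.pos _) hm'1
          (Nat.Coprime.pow_left _ ((pp.coprime_iff_not_dvd).mpr hpm')),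
        haχ m' hm'1 hm'K]
    have hχm' : χ m' * β ^ δ = χ (cP ζ) := by
      rw [hβdef, ← chi_pow hχ, ← hχ.2.1]
      apply chi_modEq hχ
      apply hcomb
      · calc m' * cR p ^ δ ≡ ζ * 1 ^ δ [MOD p ^ γ] := (hm'mod.mul ((hcR1 p).pow δ))
        _ = ζ := by rw [one_pow, mul_one]
        _ ≡ cP ζ [MOD p ^ γ] := (hcP1 ζ).symm
      · calc m' * cR p ^ δ ≡ m' * p ^ δ [MOD R] := Nat.ModEq.mul_left m' ((hcR2 p).pow δ)
        _ = M' := by rw [← hm'M']; ring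
        _ ≡ 1 [MOD R] := hM'R
        _ ≡ cP ζ [MOD R] := (hcP2 ζ).symm
    -- combine
    have hGeq : a (p ^ (α * k + j)) * χ m = a (p ^ (α * k' + δ)) * χ m' := by
      rw [← hGkn, ← hGk'n, hG]
    calc a (p ^ (α * k + j)) * χ (cP x) * β ^ δ
        = a (p ^ (α * k + j)) * (χ m * β ^ j) * β ^ δ := by rw [hχm]
      _ = (a (p ^ (α * k + j)) * χ m) * (β ^ j * β ^ δ) := by ring
      _ = (a (p ^ (α * k' + δ)) * χ m') * (β ^ j * β ^ δ) := by rw [hGeq]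
      _ = a (p ^ (α * k' + δ)) * (χ m' * β ^ δ) * β ^ j := by ring
      _ = a (p ^ (α * k' + δ)) * χ (cP ζ) * β ^ j := by rw [hχm']
  -- conclude the hypothesis
  set W := a (p ^ (α * k' + δ)) * χ (cP ζ) with hWdef
  refine ⟨α * k + (δ + γ), W / (β ^ δ * β ^ (α * k)), β, ?_, ?_⟩
  · intro e he
    have hkey := key (e - α * k) 1 (by omega) (Nat.Prime.not_dvd_one pp)
    rw [hcP1x, mul_one] at hkey
    have heq : α * k + (e - α * k) = e := by omega
    rw [heq] at hkey
    have hβδ : β ^ δ ≠ 0 := pow_ne_zero _ hβne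
    have hβαk : β ^ (α * k) ≠ 0 := pow_ne_zero _ hβne
    have hβsplit : β ^ e = β ^ (α * k) * β ^ (e - α * k) := by
      rw [← pow_add]; congr 1; omega
    rw [hβsplit]
    field_simp
    linear_combination hkey
  · intro hC
    have hWne : W ≠ 0 := by
      intro h0
      apply hC
      rw [h0, zero_div]
    have hprinc : ∀ x : ℕ, ¬ p ∣ x → χ (cP x) = 1 := by
      intro x hx
      have h1 := key (δ + γ) x (le_refl _) hx
      have h2 := key (δ + γ) 1 (le_refl _) (Nat.Prime.not_dvd_one pp)
      rw [hcP1x, mul_one] at h2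
      have hA0 : a (p ^ (α * k + (δ + γ))) * β ^ δ ≠ 0 := by
        rw [h2]
        exact mul_ne_zero hWne (pow_ne_zero _ hβne)
      have h3 : a (p ^ (α * k + (δ + γ))) * β ^ δ * χ (cP x)
          = a (p ^ (α * k + (δ + γ))) * β ^ δ * 1 := by
        rw [mul_one]
        calc a (p ^ (α * k + (δ + γ))) * β ^ δ * χ (cP x)
            = a (p ^ (α * k + (δ + γ))) * χ (cP x) * β ^ δ := by ring
          _ = W * β ^ (δ + γ) := h1
          _ = a (p ^ (α * k + (δ + γ))) * β ^ δ := h2.symm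
      exact mul_left_cancel₀ hA0 h3
    constructor
    · intro x y hxK hyK hxy
      rw [← hγdef, ← hRdef] at hxy
      have hpx : ¬ p ∣ x := by
        intro hd
        have hg : p ∣ Nat.gcd x K := Nat.dvd_gcd hd hpK
        rw [Nat.Coprime] at hxK
        rw [hxK] at hg
        exact (Nat.Prime.not_dvd_one pp) hg
      have hpy : ¬ p ∣ y := by
        intro hd
        have hg : p ∣ Nat.gcd y K := Nat.dvd_gcd hd hpK
        rw [Nat.Coprime] at hyK
        rw [hyK] at hg
        exact (Nat.Prime.not_dvd_one pp) hg
      rw [hsplit x, hsplit y, hprinc x hpx, hprinc y hpy]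
      have hcReq : χ (cR x) = χ (cR y) := by
        apply chi_modEq hχ
        apply hcomb
        · exact (hcR1 x).trans (hcR1 y).symm
        · exact ((hcR2 x).trans hxy).trans (hcR2 y).symm
      rw [hcReq]
    · intro Y hY1 hY2
      rw [← hγdef, ← hRdef] at hY1
      rw [← hγdef] at hY2
      rw [hβdef]
      apply chi_modEq hχ
      apply hcomb
      · exact hY2.trans (hcR1 p).symm
      · exact hY1.trans (hcR2 p).symm


end Stmt15

theorem stmt_15 (lam h : ℕ) (hlam : 2 ≤ lam) (hh : 1 ≤ h)
    (hcop : Nat.Coprime h lam)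
    (hnotpp : ¬ ∃ (p k : ℕ), p.Prime ∧ lam = p ^ k)
    (a : ℕ → ℂ) (haut : IsAutomatic lam a) (ha : IsMultiplicativeSeq a)
    (χ : ℕ → ℂ) (hχ : IsDirichletCharacterSeq (h * lam) χ)
    (haχ : ∀ n : ℕ, 1 ≤ n → Nat.Coprime n (h * lam) → a n = χ n) :
    ∃ d : ℕ, 1 ≤ d ∧ ∀ n : ℕ, 1 ≤ n → a (n + d) = a n :=
  Stmt15.master (h * lam) a χ (Nat.mul_pos (by omega) (by omega)) ha hχ haχ
    (Stmt15.ppl lam h hlam hh hcop hnotpp a haut ha χ hχ haχ)
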